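/- Suppose real numbers μ, a_1, …, a_14 are such that the 8 × 8 symmetric matrix G(μ, a_1, …, a_14) has rank at most 3, 0.6 ≤ μ ≤ 0.64759, and |a_j| < μ for all 1 ≤ j ≤ 14. Then a_4 = (−a_1 − μ − a_1 μ − 2 a_3 μ − μ²)/(2μ) and μ ≥ (1 + √17)/8. -/

import Mathlib

open Matrix

/-- Any `4 × 4` minor of a real `8 × 8` matrix of rank at most `3` vanishes. -/
lemma minor_zero (A : Matrix (Fin 8) (Fin 8) ℝ) (hrank : A.rank ≤ 3) (f g : Fin 4 → Fin 8) :
    (A.submatrix f g).det = 0 := by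
  by_contra hd
  have hN : LinearIndependent ℝ (A.submatrix f g) :=
    Matrix.linearIndependent_rows_iff_isUnit.2
      ((Matrix.isUnit_iff_isUnit_det _).2 (isUnit_iff_ne_zero.2 hd))
  have hM : LinearIndependent ℝ (A ∘ f) := by
    have hcomp : (LinearMap.funLeft ℝ ℝ g) ∘ (A ∘ f) = A.submatrix f g := by
      funext i; rfl
    exact LinearIndependent.of_comp (LinearMap.funLeft ℝ ℝ g) (hcomp ▸ hN)
  have hcard : Fintype.card (Fin 4) = Set.finrank ℝ (Set.range (A ∘ f)) :=
    linearIndependent_iff_card_eq_finrank_span.mp hM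
  have hsub : Submodule.span ℝ (Set.range (A ∘ f)) ≤ Submodule.span ℝ (Set.range A) :=
    Submodule.span_mono (Set.range_comp_subset_range f A)
  have hmono := Submodule.finrank_mono hsub
  rw [Matrix.rank_eq_finrank_span_row] at hrank
  unfold Matrix.row at hrank
  simp only [Fintype.card_fin] at hcard
  rw [Set.finrank] at hcard
  omega

private lemma aux_p1 {μ : ℝ} (h1 : (0.6:ℝ) ≤ μ) (h2 : μ ≤ 0.64759) :
    1 + 5*μ - 6*μ^2 - 38*μ^3 + 5*μ^4 + 65*μ^5 < 0 := by
  nlinarith [mul_nonneg (sub_nonneg.2 h1) (sub_nonneg.2 h2),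
    mul_nonneg (mul_nonneg (sub_nonneg.2 h1) (sub_nonneg.2 h1)) (sub_nonneg.2 h2),
    mul_nonneg (mul_nonneg (sub_nonneg.2 h1) (sub_nonneg.2 h2)) (sub_nonneg.2 h2),
    mul_nonneg (mul_nonneg (mul_nonneg (sub_nonneg.2 h1) (sub_nonneg.2 h1)) (sub_nonneg.2 h1)) (sub_nonneg.2 h2),
    mul_nonneg (mul_nonneg (mul_nonneg (sub_nonneg.2 h1) (sub_nonneg.2 h2)) (sub_nonneg.2 h2)) (sub_nonneg.2 h2)]

private lemma aux_p2 {μ : ℝ} (h0 : (0:ℝ) < μ) (hc : 4*μ^2 - μ - 1 < 0) :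
    -8 - 24*μ + 8*μ^2 + 56*μ^3 + 32*μ^4 < 0 := by
  nlinarith [sq_nonneg (1+μ), mul_pos h0 h0]

/-- The `8 × 8` symmetric matrix `G(μ, a₁, …, a₁₄)` from the paper. -/
def packingGram (μ a1 a2 a3 a4 a5 a6 a7 a8 a9 a10 a11 a12 a13 a14 : ℝ) :
    Matrix (Fin 8) (Fin 8) ℝ :=
  !![1,  a1,  μ,  a2,  a3, -μ,  a4, -μ;
     a1, 1,  -μ,  a5, -μ,  a6, -μ,  a7;
     μ, -μ,   1,   μ,  a8, -μ,  a9, a10;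
     a2, a5,  μ,   1, a11, a12,  μ,   μ;
     a3, -μ, a8, a11,   1,   μ,  μ,  -μ;
     -μ, a6, -μ, a12,   μ,   1,  μ, a13;
     a4, -μ, a9,   μ,   μ,   μ,  1, a14;
     -μ, a7, a10,  μ,  -μ, a13, a14,  1]

set_option maxHeartbeats 2000000 in
/-- **Step 3.** Under the rank-3 and coherence conditions on `G`, the coefficient `a₄` is determined and `μ ≥ (1 + √17)/8`. -/
theorem step3
    (μ a1 a2 a3 a4 a5 a6 a7 a8 a9 a10 a11 a12 a13 a14 : ℝ)
    (hrank : (packingGram μ a1 a2 a3 a4 a5 a6 a7 a8 a9 a10 a11 a12 a13 a14).rank ≤ 3)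
    (hμ1 : (0.6 : ℝ) ≤ μ) (hμ2 : μ ≤ 0.64759)
    (h1 : |a1| < μ) (h2 : |a2| < μ) (h3 : |a3| < μ) (h4 : |a4| < μ) (h5 : |a5| < μ)
    (h6 : |a6| < μ) (h7 : |a7| < μ) (h8 : |a8| < μ) (h9 : |a9| < μ) (h10 : |a10| < μ)
    (h11 : |a11| < μ) (h12 : |a12| < μ) (h13 : |a13| < μ) (h14 : |a14| < μ) :
    a4 = (-a1 - μ - a1 * μ - 2 * a3 * μ - μ ^ 2) / (2 * μ) ∧ (1 + Real.sqrt 17) / 8 ≤ μ := by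
  have hμ0 : (0:ℝ) < μ := by linarith
  have hμlt1 : μ < 1 := by linarith
  have ha1 := abs_lt.mp h1
  have ha3 := abs_lt.mp h3
  have ha4 := abs_lt.mp h4
  have ha6 := abs_lt.mp h6
  have ha8 := abs_lt.mp h8
  have hM1 : (1 - 1*a6^2 - 5*μ^2 - 4*μ^2*a6 + μ^2*a6^2 + 4*μ^3 + 4*μ^3*a6) = 0 := by
    have h := minor_zero _ hrank ![1,4,5,6] ![1,4,5,6]
    rw [show (packingGram μ a1 a2 a3 a4 a5 a6 a7 a8 a9 a10 a11 a12 a13 a14).submatrix ![1,4,5,6] ![1,4,5,6]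
        = !![1, -μ, a6, -μ;
        -μ, 1, μ, μ;
        a6, μ, 1, μ;
        -μ, μ, μ, 1] from by ext i j; fin_cases i <;> fin_cases j <;> rfl] at h
    simp only [Matrix.det_succ_row_zero, Fin.sum_univ_succ, Matrix.det_fin_zero] at h
    norm_num [Fin.succAbove, Fin.lt_def, Matrix.cons_val_zero, Matrix.cons_val_one,
      Matrix.head_cons, Matrix.cons_val_two, Matrix.cons_val_three, Matrix.cons_val',
      Matrix.head_fin_const, Matrix.empty_val', Matrix.cons_val_fin_one,
      Matrix.vecHead, Matrix.vecTail, Fin.castSucc, Fin.castAdd, Fin.castLE, Function.comp] at h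
    linear_combination h
  have hM3 : (1 - 1*a8^2 - 1*a6^2 + a6^2*a8^2 - 4*μ^2 + 4*μ^4) = 0 := by
    have h := minor_zero _ hrank ![1,2,4,5] ![1,2,4,5]
    rw [show (packingGram μ a1 a2 a3 a4 a5 a6 a7 a8 a9 a10 a11 a12 a13 a14).submatrix ![1,2,4,5] ![1,2,4,5]
        = !![1, -μ, -μ, a6;
        -μ, 1, a8, -μ;
        -μ, a8, 1, μ;
        a6, -μ, μ, 1] from by ext i j; fin_cases i <;> fin_cases j <;> rfl] at h
    simp only [Matrix.det_succ_row_zero, Fin.sum_univ_succ, Matrix.det_fin_zero] at h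
    norm_num [Fin.succAbove, Fin.lt_def, Matrix.cons_val_zero, Matrix.cons_val_one,
      Matrix.head_cons, Matrix.cons_val_two, Matrix.cons_val_three, Matrix.cons_val',
      Matrix.head_fin_const, Matrix.empty_val', Matrix.cons_val_fin_one,
      Matrix.vecHead, Matrix.vecTail, Fin.castSucc, Fin.castAdd, Fin.castLE, Function.comp] at h
    linear_combination h
  have hMa : (a9 - 1*a6^2*a9 - 1*μ*a8 + μ*a6^2*a8 - 2*μ^2*a9 + 2*μ^2*a8 - 2*μ^2*a6*a9 + 2*μ^2*a6*a8) = 0 := by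
    have h := minor_zero _ hrank ![1,2,4,5] ![1,4,5,6]
    rw [show (packingGram μ a1 a2 a3 a4 a5 a6 a7 a8 a9 a10 a11 a12 a13 a14).submatrix ![1,2,4,5] ![1,4,5,6]
        = !![1, -μ, a6, -μ;
        -μ, a8, -μ, a9;
        -μ, 1, μ, μ;
        a6, μ, 1, μ] from by ext i j; fin_cases i <;> fin_cases j <;> rfl] at h
    simp only [Matrix.det_succ_row_zero, Fin.sum_univ_succ, Matrix.det_fin_zero] at h
    norm_num [Fin.succAbove, Fin.lt_def, Matrix.cons_val_zero, Matrix.cons_val_one,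
      Matrix.head_cons, Matrix.cons_val_two, Matrix.cons_val_three, Matrix.cons_val',
      Matrix.head_fin_const, Matrix.empty_val', Matrix.cons_val_fin_one,
      Matrix.vecHead, Matrix.vecTail, Fin.castSucc, Fin.castAdd, Fin.castLE, Function.comp] at h
    linear_combination h
  have hMb : (a8 - 1*a6^2*a8 - 1*μ*a9 + μ*a6^2*a9 + 2*μ^2*a9 - 2*μ^2*a8 + 2*μ^2*a6*a9 - 2*μ^2*a6*a8) = 0 := by
    have h := minor_zero _ hrank ![1,2,5,6] ![1,4,5,6]
    rw [show (packingGram μ a1 a2 a3 a4 a5 a6 a7 a8 a9 a10 a11 a12 a13 a14).submatrix ![1,2,5,6] ![1,4,5,6]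
        = !![1, -μ, a6, -μ;
        -μ, a8, -μ, a9;
        a6, μ, 1, μ;
        -μ, μ, μ, 1] from by ext i j; fin_cases i <;> fin_cases j <;> rfl] at h
    simp only [Matrix.det_succ_row_zero, Fin.sum_univ_succ, Matrix.det_fin_zero] at h
    norm_num [Fin.succAbove, Fin.lt_def, Matrix.cons_val_zero, Matrix.cons_val_one,
      Matrix.head_cons, Matrix.cons_val_two, Matrix.cons_val_three, Matrix.cons_val',
      Matrix.head_fin_const, Matrix.empty_val', Matrix.cons_val_fin_one,
      Matrix.vecHead, Matrix.vecTail, Fin.castSucc, Fin.castAdd, Fin.castLE, Function.comp] at h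
    linear_combination h
  have hM4 : (-1*a1*a6 - 1*μ - 1*μ*a4 - 1*μ*a4*a6 - 1*μ*a3 - 1*μ*a3*a6 + μ^2*a4 + μ^2*a4*a6 + μ^2*a3 + μ^2*a3*a6 - 2*μ^2*a1 + μ^2*a1*a6 + 3*μ^3 + 2*μ^3*a1 - 2*μ^4) = 0 := by
    have h := minor_zero _ hrank ![0,1,4,6] ![1,4,5,6]
    rw [show (packingGram μ a1 a2 a3 a4 a5 a6 a7 a8 a9 a10 a11 a12 a13 a14).submatrix ![0,1,4,6] ![1,4,5,6]
        = !![a1, a3, -μ, a4;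
        1, -μ, a6, -μ;
        -μ, 1, μ, μ;
        -μ, μ, μ, 1] from by ext i j; fin_cases i <;> fin_cases j <;> rfl] at h
    simp only [Matrix.det_succ_row_zero, Fin.sum_univ_succ, Matrix.det_fin_zero] at h
    norm_num [Fin.succAbove, Fin.lt_def, Matrix.cons_val_zero, Matrix.cons_val_one,
      Matrix.head_cons, Matrix.cons_val_two, Matrix.cons_val_three, Matrix.cons_val',
      Matrix.head_fin_const, Matrix.empty_val', Matrix.cons_val_fin_one,
      Matrix.vecHead, Matrix.vecTail, Fin.castSucc, Fin.castAdd, Fin.castLE, Function.comp] at h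
    linear_combination h
  have hM5 : (-1*a4*a9 - 1*a3*a8 + μ + μ*a4*a8 + μ*a3*a9 - 1*μ^2 - 1*μ^2*a9 - 1*μ^2*a8 - 1*μ^2*a4 + μ^2*a4*a9 - 1*μ^2*a4*a8 - 1*μ^2*a3 - 1*μ^2*a3*a9 + μ^2*a3*a8 - 3*μ^3 + μ^3*a9 + μ^3*a8 + μ^3*a4 + μ^3*a3 + 3*μ^4) = 0 := by
    have h := minor_zero _ hrank ![0,4,5,6] ![2,4,5,6]
    rw [show (packingGram μ a1 a2 a3 a4 a5 a6 a7 a8 a9 a10 a11 a12 a13 a14).submatrix ![0,4,5,6] ![2,4,5,6]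
        = !![μ, a3, -μ, a4;
        a8, 1, μ, μ;
        -μ, μ, 1, μ;
        a9, μ, μ, 1] from by ext i j; fin_cases i <;> fin_cases j <;> rfl] at h
    simp only [Matrix.det_succ_row_zero, Fin.sum_univ_succ, Matrix.det_fin_zero] at h
    norm_num [Fin.succAbove, Fin.lt_def, Matrix.cons_val_zero, Matrix.cons_val_one,
      Matrix.head_cons, Matrix.cons_val_two, Matrix.cons_val_three, Matrix.cons_val',
      Matrix.head_fin_const, Matrix.empty_val', Matrix.cons_val_fin_one,
      Matrix.vecHead, Matrix.vecTail, Fin.castSucc, Fin.castAdd, Fin.castLE, Function.comp] at h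
    linear_combination h
  have hM6 : (a8*a9 + a3*a4 - 1*μ - 1*μ*a4*a8 - 1*μ*a3*a9 + μ^2 + μ^2*a9 + μ^2*a8 - 1*μ^2*a8*a9 + μ^2*a4 + μ^2*a4*a8 + μ^2*a3 + μ^2*a3*a9 - 1*μ^2*a3*a4 + 3*μ^3 - 1*μ^3*a9 - 1*μ^3*a8 - 1*μ^3*a4 - 1*μ^3*a3 - 3*μ^4) = 0 := by
    have h := minor_zero _ hrank ![0,2,4,5] ![0,2,5,6]
    rw [show (packingGram μ a1 a2 a3 a4 a5 a6 a7 a8 a9 a10 a11 a12 a13 a14).submatrix ![0,2,4,5] ![0,2,5,6]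
        = !![1, μ, -μ, a4;
        μ, 1, -μ, a9;
        a3, a8, μ, μ;
        -μ, -μ, 1, μ] from by ext i j; fin_cases i <;> fin_cases j <;> rfl] at h
    simp only [Matrix.det_succ_row_zero, Fin.sum_univ_succ, Matrix.det_fin_zero] at h
    norm_num [Fin.succAbove, Fin.lt_def, Matrix.cons_val_zero, Matrix.cons_val_one,
      Matrix.head_cons, Matrix.cons_val_two, Matrix.cons_val_three, Matrix.cons_val',
      Matrix.head_fin_const, Matrix.empty_val', Matrix.cons_val_fin_one,
      Matrix.vecHead, Matrix.vecTail, Fin.castSucc, Fin.castAdd, Fin.castLE, Function.comp] at h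
    linear_combination h
  have hM7 : (1 - 1*a6^2 - 1*a1^2 - 2*μ*a1*a6 - 4*μ^2 + 2*μ^2*a6 + μ^2*a6^2 - 2*μ^2*a1 + 2*μ^2*a1*a6 + μ^2*a1^2 + 2*μ^3 - 2*μ^3*a6 + 2*μ^3*a1 + μ^4) = 0 := by
    have h := minor_zero _ hrank ![0,1,2,5] ![0,1,2,5]
    rw [show (packingGram μ a1 a2 a3 a4 a5 a6 a7 a8 a9 a10 a11 a12 a13 a14).submatrix ![0,1,2,5] ![0,1,2,5]
        = !![1, a1, μ, -μ;
        a1, 1, -μ, a6;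
        μ, -μ, 1, -μ;
        -μ, a6, -μ, 1] from by ext i j; fin_cases i <;> fin_cases j <;> rfl] at h
    simp only [Matrix.det_succ_row_zero, Fin.sum_univ_succ, Matrix.det_fin_zero] at h
    norm_num [Fin.succAbove, Fin.lt_def, Matrix.cons_val_zero, Matrix.cons_val_one,
      Matrix.head_cons, Matrix.cons_val_two, Matrix.cons_val_three, Matrix.cons_val',
      Matrix.head_fin_const, Matrix.empty_val', Matrix.cons_val_fin_one,
      Matrix.vecHead, Matrix.vecTail, Fin.castSucc, Fin.castAdd, Fin.castLE, Function.comp] at h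
    linear_combination h

  -- the coefficient `a₆` is determined
  have hL : (μ+1)*a6 + (4*μ^2 - μ - 1) = 0 := by
    have hf : (μ-1)*((a6+1)*((μ+1)*a6 + (4*μ^2 - μ - 1))) = 0 := by linear_combination hM1
    rcases mul_eq_zero.mp hf with h | h
    · exfalso; linarith only [hμlt1, h]
    rcases mul_eq_zero.mp h with h | h
    · exfalso; linarith only [ha6.1, hμlt1, h]
    exact h
  -- `a₉ = -a₈`
  have hS9 : a8 + a9 = 0 := by
    have hf : (a8+a9)*((1-μ)*(1-a6^2)) = 0 := by linear_combination hMa + hMb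
    rcases mul_eq_zero.mp hf with h | h
    · exact h
    exfalso
    rcases mul_eq_zero.mp h with h | h
    · linarith only [hμlt1, h]
    · have : 0 < (1-a6)*(1+a6) :=
        mul_pos (by linarith only [ha6.2, hμlt1]) (by linarith only [ha6.1, hμlt1])
      linarith only [this, h]
  -- the value of `a₈ ^ 2`
  have hX : 2*(2*μ+1)*(1-a8^2) - (1+μ)^3 = 0 := by
    have hf : (2*(2*μ+1)*(1-a8^2) - (1+μ)^3) * (4*μ^2*(1-μ)) = 0 := by
      linear_combination (μ+1)^2 * hM3 - (-1 + a8^2 - 1*a6 + a6*a8^2 - 1*μ + μ*a8^2 - 1*μ*a6 + μ*a6*a8^2 + 4*μ^2 - 4*μ^2*a8^2) * hL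
    rcases mul_eq_zero.mp hf with h | h
    · exact h
    · exact absurd h (ne_of_gt (mul_pos (by positivity) (by linarith only [hμlt1])))
  -- the linear relation determining `a₄`
  have hA : (1+μ)*a1 + μ + μ^2 + 2*μ*(a3+a4) = 0 := by
    have hf : ((1+μ)*a1 + μ + μ^2 + 2*μ*(a3+a4)) * (-1 + 3*μ^2 - 2*μ^3) = 0 := by
      linear_combination (μ+1)*hM4 - (-1*a1 - 1*μ*a4 - 1*μ*a3 + μ^2*a4 + μ^2*a3 + μ^2*a1) * hL
    rcases mul_eq_zero.mp hf with h | h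
    · exact h
    · exfalso
      have : 0 < (1-μ)^2*(2*μ+1) :=
        mul_pos (pow_pos (by linarith only [hμlt1]) 2) (by linarith only [hμ0])
      linarith only [this, h]
  -- the quadratic equation satisfied by `a₁`
  have hQ0 : (1+μ)^2*a1^2 + 2*μ*(1-μ)*(1+3*μ)*a1 + μ^2*(25*μ^2-6*μ-7) = 0 := by
    have hf : ((1+μ)^2*a1^2 + 2*μ*(1-μ)*(1+3*μ)*a1 + μ^2*(25*μ^2-6*μ-7)) * (μ^2-1) = 0 := by
      linear_combination (μ+1)^2 * hM7 - (-1 - 1*a6 - 1*μ - 1*μ*a6 - 2*μ*a1 + 7*μ^2 + μ^2*a6 + μ^3 + μ^3*a6 + 2*μ^3*a1 - 6*μ^4) * hL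
    rcases mul_eq_zero.mp hf with h | h
    · exact h
    · exfalso
      have : 0 < (1-μ)*(1+μ) := mul_pos (by linarith only [hμlt1]) (by linarith only [hμ0])
      linarith only [this, h]
  have hB : (a4-a3)*a8*(1+2*μ) - (μ^2*(a3+a4) + 3*μ^3 - μ) = 0 := by
    have hf : ((a4-a3)*a8*(1+2*μ) - (μ^2*(a3+a4) + 3*μ^3 - μ)) * (1-μ) = 0 := by
      linear_combination hM5 - (-1*a4 + μ*a3 - 1*μ^2 + μ^2*a4 - 1*μ^2*a3 + μ^3) * hS9
    rcases mul_eq_zero.mp hf with h | h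
    · exact h
    · exfalso; linarith only [hμlt1, h]
  have hC : a8^2*(1+μ) + μ*a8*(a4-a3) - a3*a4*(1+μ) + μ - μ^2*(a3+a4) - 3*μ^3 = 0 := by
    have hf : (a8^2*(1+μ) + μ*a8*(a4-a3) - a3*a4*(1+μ) + μ - μ^2*(a3+a4) - 3*μ^3) * (μ-1) = 0 := by
      linear_combination hM6 - (a8 - 1*μ*a3 + μ^2 - 1*μ^2*a8 + μ^2*a3 - 1*μ^3) * hS9
    rcases mul_eq_zero.mp hf with h | h
    · exact h
    · exfalso; linarith only [hμlt1, h]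
  clear hM1 hM3 hMa hMb hM4 hM5 hM6 hM7 hrank
  clear h2 h5 h7 h9 h10 h11 h12 h13 h14 h1 h6 h8
  -- main inequality
  have key : 0 ≤ 4*μ^2 - μ - 1 := by
    by_contra hc
    push_neg at hc
    rcases le_or_gt ((1+μ)^2*a1 + μ*(1+2*μ-7*μ^2)) 0 with hF | hF
    · -- lower branch for `a₁`: contradiction with `-μ < a₁`
      have t1 : (a1+μ) * ((1+μ)^2*a1 + μ*(1+2*μ-7*μ^2)) ≤ 0 :=
        mul_nonpos_iff.mpr (Or.inl ⟨by linarith only [ha1.1], hF⟩)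
      have t2 : μ^2*(4*μ^2-μ-1) < 0 := mul_neg_of_pos_of_neg (by positivity) hc
      linarith only [hQ0, t1, t2]
    · -- upper branch for `a₁`
      have hGA : (1+μ)*a1 + μ*(1 + μ + 2*(a3+a4)) = 0 := by linear_combination hA
      have hGA' : (1+μ)*((1+μ)*a1 + μ*(1 + μ + 2*(a3+a4))) = 0 := by
        linear_combination (1+μ)*hGA
      have hm2 : 0 < (1+2*μ-7*μ^2) - (1+μ)*(1 + μ + 2*(a3+a4)) := by
        by_contra hm
        push_neg at hm
        have hmm : μ*((1+2*μ-7*μ^2) - (1+μ)*(1 + μ + 2*(a3+a4))) ≤ 0 :=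
          mul_nonpos_iff.mpr (Or.inl ⟨hμ0.le, hm⟩)
        linarith only [hF, hmm, hGA']
      have hRT0 : (1+μ)*(1 + μ + 2*(a3+a4))^2 - 2*(1-μ)*(1+3*μ)*(1 + μ + 2*(a3+a4)) + (1+μ)*(25*μ^2-6*μ-7) = 0 := by
        have hRT : μ^2*((1+μ)*(1 + μ + 2*(a3+a4))^2 - 2*(1-μ)*(1+3*μ)*(1 + μ + 2*(a3+a4)) + (1+μ)*(25*μ^2-6*μ-7)) = 0 := by
          linear_combination (1+μ)*hQ0 + (-1*a1 - 2*μ + μ*(1 + μ + 2*(a3+a4)) - 2*μ*a1 - 4*μ^2 + μ^2*(1 + μ + 2*(a3+a4)) - 1*μ^2*a1 + 6*μ^3)*hGA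
        exact (mul_eq_zero.mp hRT).resolve_left (by positivity)
      have hp1 := aux_p1 hμ1 hμ2
      have hp2 := aux_p2 hμ0 hc
      have hTlt : μ*(1 + μ + 2*(a3+a4)) < 4*μ^2-μ-1 := by
        by_contra hm1
        push_neg at hm1
        rcases le_or_gt (11*μ^3+μ^2-3*μ-1) 0 with hw | hw
        · have y1 : 0 < (-(1 + 5*μ - 6*μ^2 - 38*μ^3 + 5*μ^4 + 65*μ^5)) * ((1+2*μ-7*μ^2) - (1+μ)*(1 + μ + 2*(a3+a4))) :=
            mul_pos (by linarith only [hp1]) hm2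
          have y2 : 0 ≤ (μ*(-(-8 - 24*μ + 8*μ^2 + 56*μ^3 + 32*μ^4))) * (μ*(1 + μ + 2*(a3+a4)) - (4*μ^2-μ-1)) :=
            mul_nonneg (mul_nonneg hμ0.le (by linarith only [hp2])) (by linarith only [hm1])
          have y3 : 0 ≤ (-(11*μ^3+μ^2-3*μ-1)) * ((μ*(1 + μ + 2*(a3+a4)) - (4*μ^2-μ-1)) * ((1+2*μ-7*μ^2) - (1+μ)*(1 + μ + 2*(a3+a4)))) :=
            mul_nonneg (by linarith only [hw]) (mul_nonneg (by linarith only [hm1]) hm2.le)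
          have heq : (-(1 + 5*μ - 6*μ^2 - 38*μ^3 + 5*μ^4 + 65*μ^5)) * ((1+2*μ-7*μ^2) - (1+μ)*(1 + μ + 2*(a3+a4)))
              + (μ*(-(-8 - 24*μ + 8*μ^2 + 56*μ^3 + 32*μ^4))) * (μ*(1 + μ + 2*(a3+a4)) - (4*μ^2-μ-1))
              + (-(11*μ^3+μ^2-3*μ-1)) * ((μ*(1 + μ + 2*(a3+a4)) - (4*μ^2-μ-1)) * ((1+2*μ-7*μ^2) - (1+μ)*(1 + μ + 2*(a3+a4)))) = 0 := by
            linear_combination ((11*μ^3+μ^2-3*μ-1)*μ)*hRT0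
          linarith only [y1, y2, y3, heq]
        · have x1 : 0 ≤ (1+μ)*(μ*(1 + μ + 2*(a3+a4)) - (4*μ^2-μ-1)) :=
            mul_nonneg (by linarith only [hμ0]) (by linarith only [hm1])
          have x2 : 0 < μ*((1+2*μ-7*μ^2) - (1+μ)*(1 + μ + 2*(a3+a4))) := mul_pos hμ0 hm2
          linarith only [x1, x2, hw]
      have z1 : 0 < (2*(1+2*μ)*(1+μ)) * ((μ+a3)*(μ+a4)) :=
        mul_pos (mul_pos (by linarith only [hμ0]) (by linarith only [hμ0]))
          (mul_pos (by linarith only [ha3.1]) (by linarith only [ha4.1]))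
      have z2 : (1+μ)^2 * (2*(a3+a4)*μ + (3*μ+1)*(1-μ)) < 0 :=
        mul_neg_of_pos_of_neg (by positivity) (by linarith only [hTlt])
      have hgid : 2*(1+2*μ)*(1+μ)*((μ+a3)*(μ+a4)) - (1+μ)^2*(2*(a3+a4)*μ + (3*μ+1)*(1-μ)) = 0 := by
        linear_combination (-(2*(1+2*μ)))*hC + (2*μ)*hB - (1+μ)*hX
      linarith only [z1, z2, hgid]
  constructor
  · rw [eq_div_iff (by positivity : (2*μ) ≠ 0)]
    linear_combination hA
  · have h17 : Real.sqrt 17 ≤ 8*μ - 1 := by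
      have hs : Real.sqrt 17 ≤ Real.sqrt ((8*μ-1)^2) :=
        Real.sqrt_le_sqrt (by linarith only [key])
      rwa [Real.sqrt_sq (by linarith only [hμ1] : (0:ℝ) ≤ 8*μ-1)] at hs
    linarith only [h17]
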